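/- For any b ∈ ℂ^{2N+1}, the Hamiltonian satisfies the lower bound H(b) ≥ −(7/22) M(b)^2, and this bound is attained: there exists b with M(b) = 1 and H(b) = −7/22. -/

import Mathlib

/-- The toy-model Hamiltonian. -/
noncomputable def toyH (N : ℕ) (b : ℤ → ℂ) : ℝ :=
  ∑ j ∈ Finset.Icc (-(N : ℤ)) (N : ℤ),
    ((1 / 2) * (‖b j‖) ^ 4
      - 2 * ((((starRingEnd ℂ) (b j)) ^ 2 * (b (j - 1)) ^ 2).re))

/-- The mass `M(b) = Σ_{j=-N}^N |b_j|²`. -/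
noncomputable def toyM (N : ℕ) (b : ℤ → ℂ) : ℝ :=
  ∑ j ∈ Finset.Icc (-(N : ℤ)) (N : ℤ), (‖b j‖) ^ 2

/-- The value function of the one-sided minimization problem:
`psiV c m` is the minimum of `Σ (x_j²/2 - 2 x_j x_{j-1})` over nonnegative
sequences `x` of total mass `m` whose left neighbour is `c`. -/
noncomputable def psiV (c m : ℝ) : ℝ :=
  if 10 * c ≤ 3 * m then -(7/22)*m^2 - (6/11)*(c*m) - (12/11)*c^2
  else if 2 * c ≤ 3 * m then -(1/4)*m^2 - c*m - (1/3)*c^2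
  else (1/2)*m^2 - 2*(c*m)

lemma psiV_zero (c : ℝ) : psiV c 0 ≤ 0 := by
  unfold psiV
  split_ifs with h1 h2 <;> nlinarith [sq_nonneg c]

lemma psiV_of_zero {m : ℝ} (hm : 0 ≤ m) : psiV 0 m = -(7/22)*m^2 := by
  unfold psiV
  rw [if_pos (by linarith)]
  ring

/-- The Bellman (dynamic programming) inequality for `psiV`. -/
lemma psiV_bellman (b c m : ℝ) (hb : 0 ≤ b) (hc : 0 ≤ c) (hbm : b ≤ m) :
    psiV c m ≤ (1/2)*b^2 - 2*(b*c) + psiV b (m - b) := by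
  unfold psiV
  split_ifs with h1 h2 h3 h4 h5 h6 h7 h8 h9 h10 <;>
  first
  | nlinarith [mul_nonneg hb hc, sq_nonneg b, sq_nonneg c,
      mul_nonneg hb (by linarith : (0:ℝ) ≤ 3*m - 13*b),
      mul_nonneg hc (by linarith : (0:ℝ) ≤ 3*m - 13*b)]
  | nlinarith [sq_nonneg (11*b - 12*c - 3*m)]
  | nlinarith [sq_nonneg (5*b - 3*m), sq_nonneg (3*m - 10*c),
      mul_nonneg (by linarith : (0:ℝ) ≤ 5*b - 3*m) (by linarith : (0:ℝ) ≤ 3*m - 10*c)]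
  | nlinarith [sq_nonneg b, sq_nonneg c, mul_nonneg hb hc,
      mul_nonneg hb (by linarith : (0:ℝ) ≤ 3*m - 13*b),
      mul_nonneg hc (by linarith : (0:ℝ) ≤ 3*m - 13*b),
      mul_nonneg (by linarith : (0:ℝ) ≤ 10*c - 3*m) (by linarith : (0:ℝ) ≤ 3*m - 2*c)]
  | nlinarith [sq_nonneg (3*m - 5*b), sq_nonneg (10*c - 3*m),
      mul_nonneg (by linarith : (0:ℝ) ≤ 3*m - 5*b) (by linarith : (0:ℝ) ≤ 10*c - 3*m)]
  | nlinarith [sq_nonneg (6*b - 2*c - 3*m)]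
  | nlinarith [sq_nonneg b, sq_nonneg (m - b),
      mul_nonneg hb (by linarith : (0:ℝ) ≤ 3*m - 13*b),
      mul_nonneg (by linarith : (0:ℝ) ≤ m - b) (by linarith : (0:ℝ) ≤ 2*c - 3*m)]
  | nlinarith [sq_nonneg b, sq_nonneg (m - b),
      mul_nonneg hb (by linarith : (0:ℝ) ≤ 3*m - 5*b),
      mul_nonneg (by linarith : (0:ℝ) ≤ m - b) (by linarith : (0:ℝ) ≤ 2*c - 3*m)]
  | nlinarith [sq_nonneg (m - b),
      mul_nonneg (by linarith : (0:ℝ) ≤ m - b) (by linarith : (0:ℝ) ≤ 2*c - 3*m)]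

/-- Downward induction over the window, using the Bellman inequality. -/
lemma psiV_key (N : ℕ) (x : ℤ → ℝ) (hx : ∀ j, 0 ≤ x j) :
    ∀ n : ℕ, psiV (x ((N:ℤ) - n)) (∑ j ∈ Finset.Icc ((N:ℤ)+1-n) N, x j)
      ≤ ∑ j ∈ Finset.Icc ((N:ℤ)+1-n) N, ((1/2)*(x j)^2 - 2*(x j * x (j-1))) := by
  intro n
  induction n with
  | zero =>
      have he : Finset.Icc ((N:ℤ)+1-(0:ℕ)) N = ∅ := by
        apply Finset.Icc_eq_empty
        push_cast
        omega
      rw [he]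
      simpa using psiV_zero (x ((N:ℤ) - (0:ℕ)))
  | succ n ih =>
      have hIcc : Finset.Icc ((N:ℤ)+1-((n+1:ℕ):ℤ)) N
          = insert ((N:ℤ)-n) (Finset.Icc ((N:ℤ)+1-(n:ℕ)) N) := by
        ext j
        simp only [Finset.mem_Icc, Finset.mem_insert]
        push_cast
        omega
      have hnm : ((N:ℤ)-n) ∉ Finset.Icc ((N:ℤ)+1-(n:ℕ)) N := by
        simp only [Finset.mem_Icc]
        push_cast
        omega
      rw [hIcc, Finset.sum_insert hnm, Finset.sum_insert hnm]
      have hS : 0 ≤ ∑ j ∈ Finset.Icc ((N:ℤ)+1-(n:ℕ)) N, x j :=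
        Finset.sum_nonneg fun j _ => hx j
      have hbel := psiV_bellman (x ((N:ℤ)-n)) (x ((N:ℤ)-((n+1:ℕ):ℤ)))
        (x ((N:ℤ)-n) + ∑ j ∈ Finset.Icc ((N:ℤ)+1-(n:ℕ)) N, x j)
        (hx _) (hx _) (by linarith)
      rw [add_sub_cancel_left] at hbel
      have hidx : (N:ℤ) - n - 1 = (N:ℤ) - ((n+1:ℕ):ℤ) := by push_cast; ring
      rw [hidx]
      calc psiV (x ((N:ℤ)-((n+1:ℕ):ℤ)))
            (x ((N:ℤ)-n) + ∑ j ∈ Finset.Icc ((N:ℤ)+1-(n:ℕ)) N, x j)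
          ≤ (1/2)*(x ((N:ℤ)-n))^2 - 2*(x ((N:ℤ)-n) * x ((N:ℤ)-((n+1:ℕ):ℤ)))
            + psiV (x ((N:ℤ)-n)) (∑ j ∈ Finset.Icc ((N:ℤ)+1-(n:ℕ)) N, x j) := hbel
        _ ≤ _ := by
            have := ih
            linarith

/-- The real sharp lower bound. -/
lemma real_bound (N : ℕ) (x : ℤ → ℝ) (hx : ∀ j, 0 ≤ x j)
    (h0 : x (-(N:ℤ)-1) = 0) :
    -(7/22)*(∑ j ∈ Finset.Icc (-(N:ℤ)) N, x j)^2
      ≤ ∑ j ∈ Finset.Icc (-(N:ℤ)) N, ((1/2)*(x j)^2 - 2*(x j * x (j-1))) := by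
  have hkey := psiV_key N x hx (2*N+1)
  have e1 : (N:ℤ) - ((2*N+1:ℕ):ℤ) = -(N:ℤ)-1 := by push_cast; ring
  have e2 : (N:ℤ)+1-((2*N+1:ℕ):ℤ) = -(N:ℤ) := by push_cast; ring
  rw [e1, e2, h0] at hkey
  have hm : 0 ≤ ∑ j ∈ Finset.Icc (-(N:ℤ)) N, x j :=
    Finset.sum_nonneg fun j _ => hx j
  rw [psiV_of_zero hm] at hkey
  exact hkey

/-- Sharp lower bound: `H(b) ≥ −(7/22) M(b)²`, with equality attained at a mass-one state. -/
theorem toyH_lower_bound (N : ℕ) (hN : 2 ≤ N) :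
    (∀ b : ℤ → ℂ, (∀ j : ℤ, j ∉ Finset.Icc (-(N : ℤ)) (N : ℤ) → b j = 0) →
      -(7 / 22) * (toyM N b) ^ 2 ≤ toyH N b) ∧
    (∃ b : ℤ → ℂ, (∀ j : ℤ, j ∉ Finset.Icc (-(N : ℤ)) (N : ℤ) → b j = 0) ∧
      toyM N b = 1 ∧ toyH N b = -(7 / 22)) := by
  constructor
  · intro b hb
    set x : ℤ → ℝ := fun j => (‖b j‖)^2 with hxdef
    have hx : ∀ j, 0 ≤ x j := fun j => sq_nonneg _
    have h0 : x (-(N:ℤ)-1) = 0 := by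
      have : b (-(N:ℤ)-1) = 0 := by
        apply hb
        simp only [Finset.mem_Icc]
        omega
      simp [hxdef, this]
    have hmain := real_bound N x hx h0
    have hM : toyM N b = ∑ j ∈ Finset.Icc (-(N:ℤ)) N, x j := rfl
    have hH : ∑ j ∈ Finset.Icc (-(N:ℤ)) N, ((1/2)*(x j)^2 - 2*(x j * x (j-1)))
        ≤ toyH N b := by
      apply Finset.sum_le_sum
      intro j _
      have habs : ((((starRingEnd ℂ) (b j)) ^ 2 * (b (j - 1)) ^ 2).re)
          ≤ x j * x (j-1) := by
        calc ((((starRingEnd ℂ) (b j)) ^ 2 * (b (j - 1)) ^ 2).re)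
            ≤ ‖(((starRingEnd ℂ) (b j)) ^ 2 * (b (j - 1)) ^ 2)‖ :=
              Complex.re_le_norm _
          _ = x j * x (j-1) := by
              simp [hxdef, map_mul, map_pow, Complex.norm_conj]
      have hx4 : (1/2) * (‖b j‖)^4 = (1/2)*(x j)^2 := by
        simp only [hxdef]
        ring
      rw [← hx4] at *
      linarith
    calc -(7/22) * (toyM N b)^2
        = -(7/22)*(∑ j ∈ Finset.Icc (-(N:ℤ)) N, x j)^2 := by rw [hM]
      _ ≤ ∑ j ∈ Finset.Icc (-(N:ℤ)) N, ((1/2)*(x j)^2 - 2*(x j * x (j-1))) := hmain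
      _ ≤ toyH N b := hH
  · refine ⟨fun j => if j = 0 then ((Real.sqrt (5/11) : ℝ) : ℂ)
      else if j = 1 then ((Real.sqrt (3/11) : ℝ) : ℂ)
      else if j = -1 then ((Real.sqrt (3/11) : ℝ) : ℂ) else 0, ?_, ?_, ?_⟩
    · intro j hj
      simp only [Finset.mem_Icc, not_and, not_le] at hj
      have h1 : j ≠ 0 := by omega
      have h2 : j ≠ 1 := by omega
      have h3 : j ≠ -1 := by omega
      simp [h1, h2, h3]

    · have habs3 : ‖((Real.sqrt (3/11) : ℝ) : ℂ)‖ = Real.sqrt (3/11) := by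
        rw [Complex.norm_real, Real.norm_of_nonneg (Real.sqrt_nonneg _)]
      have habs5 : ‖((Real.sqrt (5/11) : ℝ) : ℂ)‖ = Real.sqrt (5/11) := by
        rw [Complex.norm_real, Real.norm_of_nonneg (Real.sqrt_nonneg _)]
      have hs3 : Real.sqrt (3/11)^2 = 3/11 := Real.sq_sqrt (by norm_num)
      have hs5 : Real.sqrt (5/11)^2 = 5/11 := Real.sq_sqrt (by norm_num)
      have hsub : Finset.Icc (-1:ℤ) 1 ⊆ Finset.Icc (-(N:ℤ)) N := by
        intro j hj
        simp only [Finset.mem_Icc] at hj ⊢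
        omega
      rw [toyM, ← Finset.sum_subset hsub]
      · have hset : Finset.Icc (-1:ℤ) 1 = {-1, 0, 1} := by
          ext j
          simp only [Finset.mem_Icc, Finset.mem_insert, Finset.mem_singleton]
          omega
        rw [hset]
        rw [Finset.sum_insert (by decide), Finset.sum_insert (by decide),
          Finset.sum_singleton]
        simp only [reduceIte, Int.reduceEq]
        rw [habs3, habs5, hs3, hs5]
        norm_num
      · intro j _ hj
        simp only [Finset.mem_Icc] at hj
        have h1 : j ≠ 0 := by omega
        have h2 : j ≠ 1 := by omega
        have h3 : j ≠ -1 := by omega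
        simp [h1, h2, h3]
    · have habs3 : ‖((Real.sqrt (3/11) : ℝ) : ℂ)‖ = Real.sqrt (3/11) := by
        rw [Complex.norm_real, Real.norm_of_nonneg (Real.sqrt_nonneg _)]
      have habs5 : ‖((Real.sqrt (5/11) : ℝ) : ℂ)‖ = Real.sqrt (5/11) := by
        rw [Complex.norm_real, Real.norm_of_nonneg (Real.sqrt_nonneg _)]
      have hs3 : Real.sqrt (3/11)^2 = 3/11 := Real.sq_sqrt (by norm_num)
      have hs5 : Real.sqrt (5/11)^2 = 5/11 := Real.sq_sqrt (by norm_num)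
      have hsub : Finset.Icc (-1:ℤ) 1 ⊆ Finset.Icc (-(N:ℤ)) N := by
        intro j hj
        simp only [Finset.mem_Icc] at hj ⊢
        omega
      rw [toyH, ← Finset.sum_subset hsub]
      · have hset : Finset.Icc (-1:ℤ) 1 = {-1, 0, 1} := by
          ext j
          simp only [Finset.mem_Icc, Finset.mem_insert, Finset.mem_singleton]
          omega
        rw [hset]
        rw [Finset.sum_insert (by decide), Finset.sum_insert (by decide),
          Finset.sum_singleton]
        simp only [Int.reduceSub, Int.reduceNeg, reduceIte, Int.reduceEq]
        simp only [Complex.conj_ofReal, ne_eq, OfNat.ofNat_ne_zero,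
          not_false_eq_true, zero_pow, mul_zero, Complex.zero_re]
        simp only [← Complex.ofReal_pow, ← Complex.ofReal_mul, Complex.ofReal_re]
        rw [habs3, habs5]
        rw [show Real.sqrt (3/11)^4 = (Real.sqrt (3/11)^2)^2 by ring,
          show Real.sqrt (5/11)^4 = (Real.sqrt (5/11)^2)^2 by ring, hs3, hs5]
        norm_num
      · intro j _ hj
        simp only [Finset.mem_Icc] at hj
        have h1 : j ≠ 0 := by omega
        have h2 : j ≠ 1 := by omega
        have h3 : j ≠ -1 := by omega
        simp [h1, h2, h3]
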